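/- If ξ* = (w_1,…,w_N) minimizes the convex, linearly differentiable criterion Φ over the set Ξ of bounded approximate designs, u is an index with w_u = μ_u, and ℓ is an index with w_ℓ = ν_ℓ, then F_Φ(ξ*; u) ≤ F_Φ(ξ*; ℓ). In particular, if every index i satisfies either w_i = ν_i or w_i = μ_i, then max over {i : w_i = μ_i} of F_Φ(ξ*; i) is at most min over {i : w_i = ν_i} of F_Φ(ξ*; i). -/
import Mathlib

lemma stmt2_aux
    (N : ℕ)
    (Δ : Set (Fin N → ℝ))
    (hΔ : Δ = {w : Fin N → ℝ | (∀ i, 0 ≤ w i) ∧ ∑ i, w i = 1})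
    (Φ : (Fin N → ℝ) → ℝ)
    (F : (Fin N → ℝ) → (Fin N → ℝ) → ℝ)
    (hF : ∀ ξ ∈ Δ, ∀ η ∈ Δ,
      Filter.Tendsto (fun α : ℝ => (Φ ((1 - α) • ξ + α • η) - Φ ξ) / α)
        (nhdsWithin 0 (Set.Ioi 0)) (nhds (F ξ η)))
    (hlin : ∀ ξ ∈ Δ, ∀ η ∈ Δ, F ξ η = ∑ i, η i * F ξ (Pi.single i 1))
    (ν μ : Fin N → ℝ)
    (hν0 : ∀ i, 0 ≤ ν i) (hνμ : ∀ i, ν i < μ i)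
    (Ξ : Set (Fin N → ℝ))
    (hΞ : Ξ = {w : Fin N → ℝ | w ∈ Δ ∧ ∀ i, ν i ≤ w i ∧ w i ≤ μ i})
    (ξs : Fin N → ℝ) (hmem : ξs ∈ Ξ)
    (hopt : ∀ ξ ∈ Ξ, Φ ξs ≤ Φ ξ)
    (u l : Fin N)
    (hu : ξs u = μ u)
    (hl : ξs l = ν l) :
    F ξs (Pi.single u 1) ≤ F ξs (Pi.single l 1) := by
  have hul : u ≠ l := by
    rintro rfl
    exact (hνμ u).ne (hl.symm.trans hu)
  set ε : ℝ := min (μ u - ν u) (μ l - ν l) with hε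
  have hεpos : 0 < ε := lt_min (by linarith [hνμ u]) (by linarith [hνμ l])
  have hεu : ε ≤ μ u - ν u := min_le_left _ _
  have hεl : ε ≤ μ l - ν l := min_le_right _ _
  set η : Fin N → ℝ := fun i => ξs i + ε * ((Pi.single l (1:ℝ) : Fin N → ℝ) i - (Pi.single u (1:ℝ) : Fin N → ℝ) i) with hη
  rw [hΞ] at hmem
  obtain ⟨hmemΔ, hbounds⟩ := hmem
  rw [hΔ] at hmemΔ
  obtain ⟨hpos, hsum⟩ := hmemΔ
  have hsingle : ∀ (j : Fin N) (c : Fin N → ℝ), ∑ i, (Pi.single j 1 : Fin N → ℝ) i * c i = c j := by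
    intro j c
    simp [Pi.single_apply, ite_mul]
  have hsumsingle : ∀ (j : Fin N), ∑ i, (Pi.single j 1 : Fin N → ℝ) i = 1 := by
    intro j
    simp [Pi.single_apply]
  -- η bounds
  have hηb : ∀ i, ν i ≤ η i ∧ η i ≤ μ i := by
    intro i
    rcases eq_or_ne i u with rfl | hiu
    · have he : η i = ξs i - ε := by
        have : η i = ξs i + ε * ((Pi.single l 1 : Fin N → ℝ) i - (Pi.single i 1 : Fin N → ℝ) i) := rfl
        rw [this, Pi.single_eq_same, Pi.single_eq_of_ne hul]; ring
      rw [he]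
      constructor <;> [linarith [hu, hεu]; linarith [hu, hεpos]]
    · rcases eq_or_ne i l with rfl | hil
      · have he : η i = ξs i + ε := by
          have : η i = ξs i + ε * ((Pi.single i 1 : Fin N → ℝ) i - (Pi.single u 1 : Fin N → ℝ) i) := rfl
          rw [this, Pi.single_eq_same, Pi.single_eq_of_ne hiu]; ring
        rw [he]
        constructor <;> [linarith [hl, hεpos]; linarith [hl, hεl]]
      · have he : η i = ξs i := by
          have : η i = ξs i + ε * ((Pi.single l 1 : Fin N → ℝ) i - (Pi.single u 1 : Fin N → ℝ) i) := rfl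
          rw [this, Pi.single_eq_of_ne hil, Pi.single_eq_of_ne hiu]; ring
        rw [he]
        exact hbounds i
  have hηsum : ∑ i, η i = 1 := by
    simp only [hη]
    rw [Finset.sum_add_distrib, hsum, ← Finset.mul_sum, Finset.sum_sub_distrib,
      hsumsingle, hsumsingle]
    ring
  have hηΔ : η ∈ Δ := by
    rw [hΔ]
    exact ⟨fun i => le_trans (hν0 i) (hηb i).1, hηsum⟩
  have hηΞ : η ∈ Ξ := by
    rw [hΞ]; exact ⟨hηΔ, hηb⟩
  have hξsΔ : ξs ∈ Δ := by
    rw [hΔ]; exact ⟨hpos, hsum⟩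
  have hξsΞ : ξs ∈ Ξ := by
    rw [hΞ]; exact ⟨hξsΔ, hbounds⟩
  -- convex combos in Ξ
  have hcomb : ∀ α : ℝ, 0 ≤ α → α ≤ 1 → (1 - α) • ξs + α • η ∈ Ξ := by
    intro α h0 h1
    rw [hΞ]
    constructor
    · rw [hΔ]
      constructor
      · intro i
        have h1' := le_trans (hν0 i) (hηb i).1
        have h2' := hpos i
        simp only [Pi.add_apply, Pi.smul_apply, smul_eq_mul]
        nlinarith
      · simp only [Pi.add_apply, Pi.smul_apply, smul_eq_mul]
        rw [Finset.sum_add_distrib, ← Finset.mul_sum, ← Finset.mul_sum, hsum, hηsum]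
        ring
    · intro i
      have hbi := hbounds i
      have hηi := hηb i
      simp only [Pi.add_apply, Pi.smul_apply, smul_eq_mul]
      constructor <;> nlinarith [hbi.1, hbi.2, hηi.1, hηi.2]
  -- F ξs η ≥ 0
  have hFη : 0 ≤ F ξs η := by
    refine ge_of_tendsto (hF ξs hξsΔ η hηΔ) ?_
    filter_upwards [Ioo_mem_nhdsGT_of_mem (Set.mem_Ico.mpr ⟨le_refl (0:ℝ), one_pos⟩)] with α hα
    have := hopt _ (hcomb α hα.1.le hα.2.le)
    exact div_nonneg (by linarith) hα.1.le
  -- F ξs ξs = 0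
  have hFself : F ξs ξs = 0 := by
    have h1 : Filter.Tendsto (fun α : ℝ => (Φ ((1 - α) • ξs + α • ξs) - Φ ξs) / α)
        (nhdsWithin 0 (Set.Ioi 0)) (nhds 0) := by
      have : ∀ α : ℝ, (Φ ((1 - α) • ξs + α • ξs) - Φ ξs) / α = 0 := by
        intro α
        have : (1 - α) • ξs + α • ξs = ξs := by
          rw [← add_smul]; ring_nf; simp
        rw [this]; simp
      simp only [this]
      exact tendsto_const_nhds
    exact (tendsto_nhds_unique (hF ξs hξsΔ ξs hξsΔ) h1)
  -- compute
  have hsum0 : ∑ i, ξs i * F ξs (Pi.single i 1) = 0 := by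
    rw [← hlin ξs hξsΔ ξs hξsΔ, hFself]
  have hexpand : F ξs η = ε * (F ξs (Pi.single l 1) - F ξs (Pi.single u 1)) := by
    rw [hlin ξs hξsΔ η hηΔ]
    have hpt : ∀ i ∈ Finset.univ, η i * F ξs (Pi.single i 1)
        = ξs i * F ξs (Pi.single i 1)
          + ε * ((Pi.single l 1 : Fin N → ℝ) i * F ξs (Pi.single i 1))
          - ε * ((Pi.single u 1 : Fin N → ℝ) i * F ξs (Pi.single i 1)) := by
      intro i _
      simp only [hη]; ring
    rw [Finset.sum_congr rfl hpt, Finset.sum_sub_distrib, Finset.sum_add_distrib,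
      ← Finset.mul_sum, ← Finset.mul_sum, hsingle, hsingle, hsum0]
    ring
  rw [hexpand] at hFη
  nlinarith [hεpos]

theorem stmt_2
    (N : ℕ) (hN : 1 ≤ N)
    (Δ : Set (Fin N → ℝ))
    (hΔ : Δ = {w : Fin N → ℝ | (∀ i, 0 ≤ w i) ∧ ∑ i, w i = 1})
    (Φ : (Fin N → ℝ) → ℝ)
    (hconv : ConvexOn ℝ Δ Φ)
    (F : (Fin N → ℝ) → (Fin N → ℝ) → ℝ)
    (hF : ∀ ξ ∈ Δ, ∀ η ∈ Δ,
      Filter.Tendsto (fun α : ℝ => (Φ ((1 - α) • ξ + α • η) - Φ ξ) / α)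
        (nhdsWithin 0 (Set.Ioi 0)) (nhds (F ξ η)))
    (hlin : ∀ ξ ∈ Δ, ∀ η ∈ Δ, F ξ η = ∑ i, η i * F ξ (Pi.single i 1))
    (ν μ : Fin N → ℝ)
    (hν0 : ∀ i, 0 ≤ ν i) (hνμ : ∀ i, ν i < μ i) (hμ1 : ∀ i, μ i ≤ 1)
    (hνsum : ∑ i, ν i ≤ 1) (hμsum : 1 ≤ ∑ i, μ i)
    (Ξ : Set (Fin N → ℝ))
    (hΞ : Ξ = {w : Fin N → ℝ | w ∈ Δ ∧ ∀ i, ν i ≤ w i ∧ w i ≤ μ i})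
    (ξs : Fin N → ℝ) (hmem : ξs ∈ Ξ)
    (hopt : ∀ ξ ∈ Ξ, Φ ξs ≤ Φ ξ)
    (u l : Fin N)
    (hu : ξs u = μ u)
    (hl : ξs l = ν l) :
    F ξs (Pi.single u 1) ≤ F ξs (Pi.single l 1) ∧
      ((∀ k, ξs k = ν k ∨ ξs k = μ k) →
        ∀ u' l', ξs u' = μ u' → ξs l' = ν l' →
          F ξs (Pi.single u' 1) ≤ F ξs (Pi.single l' 1)) := by
  refine ⟨stmt2_aux N Δ hΔ Φ F hF hlin ν μ hν0 hνμ Ξ hΞ ξs hmem hopt u l hu hl, ?_⟩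
  intro _ u' l' hu' hl'
  exact stmt2_aux N Δ hΔ Φ F hF hlin ν μ hν0 hνμ Ξ hΞ ξs hmem hopt u' l' hu' hl'
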